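/- Let (s_n) be a sequence of Bernoulli random variables adapted to a filtration with P(s_n = 1 | F_{n−1}) = q_n, where q_n → ν almost surely for a constant ν ∈ (0,1). Then (1/n) Σ_{k=1}^n s_k → ν almost surely. -/

import Mathlib

open Filter MeasureTheory

lemma kron_id (x : ℕ → ℝ) (n : ℕ) :
    ∑ k ∈ Finset.range n, ((k : ℝ) + 1) * x k
      = (n : ℝ) * (∑ k ∈ Finset.range n, x k)
        - ∑ k ∈ Finset.range n, (∑ j ∈ Finset.range k, x j) := by
  induction n with
  | zero => simp
  | succ n ih =>
      rw [Finset.sum_range_succ, Finset.sum_range_succ (fun k => x k),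
        Finset.sum_range_succ (fun k => ∑ j ∈ Finset.range k, x j), ih]
      push_cast
      ring

lemma kronecker_special (x : ℕ → ℝ) (L : ℝ)
    (h : Tendsto (fun n => ∑ k ∈ Finset.range n, x k) atTop (nhds L)) :
    Tendsto (fun n : ℕ => (1 / (n : ℝ)) * ∑ k ∈ Finset.range n, ((k : ℝ) + 1) * x k)
      atTop (nhds 0) := by
  have hc := h.cesaro
  have h2 : Tendsto (fun n : ℕ => (∑ k ∈ Finset.range n, x k)
      - (n : ℝ)⁻¹ * ∑ i ∈ Finset.range n, (∑ j ∈ Finset.range i, x j))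
      atTop (nhds (L - L)) := h.sub hc
  rw [sub_self] at h2
  refine h2.congr' ?_
  filter_upwards [eventually_ge_atTop 1] with n hn
  have hn' : (n : ℝ) ≠ 0 := by positivity
  rw [kron_id, one_div, mul_sub, inv_mul_cancel_left₀ hn']

lemma invsq_sum_le (n : ℕ) :
    (∑ k ∈ Finset.range n, (((k : ℝ) + 1) ^ 2)⁻¹) ≤ 2 := by
  have key : ∀ n : ℕ, (∑ k ∈ Finset.range (n + 1), (((k : ℝ) + 1) ^ 2)⁻¹)
      ≤ 2 - ((n : ℝ) + 1)⁻¹ := by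
    intro n
    induction n with
    | zero => norm_num
    | succ n ih =>
        rw [Finset.sum_range_succ]
        have h1 : (0:ℝ) < (n : ℝ) + 1 := by positivity
        have h2 : (0:ℝ) < (n : ℝ) + 2 := by positivity
        have e1 : ((n : ℝ) + 1)⁻¹ - ((n : ℝ) + 1 + 1)⁻¹ = (((n : ℝ) + 1) * ((n : ℝ) + 1 + 1))⁻¹ := by
          rw [eq_comm, inv_eq_iff_eq_inv, eq_comm, inv_eq_iff_eq_inv, eq_comm]
          field_simp
          ring
        have e2 : ((((n : ℝ) + 1) + 1) ^ 2)⁻¹ ≤ (((n : ℝ) + 1) * ((n : ℝ) + 1 + 1))⁻¹ := by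
          apply inv_anti₀ (by positivity)
          nlinarith
        push_cast
        push_cast at ih
        linarith [e1 ▸ e2]
  match n with
  | 0 => simp
  | n + 1 =>
      refine (key n).trans ?_
      have : (0:ℝ) < ((n:ℝ)+1)⁻¹ := by positivity
      linarith

theorem stmt_9 {Ω : Type*} {m : MeasurableSpace Ω} {μ : Measure Ω}
    [IsProbabilityMeasure μ] (ℱ : Filtration ℕ m)
    (s q : ℕ → Ω → ℝ) (ν : ℝ) (hν0 : 0 < ν) (hν1 : ν < 1)
    (hs01 : ∀ n ω, s n ω = 0 ∨ s n ω = 1)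
    (hadapt : ∀ n, StronglyMeasurable[ℱ (n + 1)] (s (n + 1)))
    (hq : ∀ n, StronglyMeasurable[ℱ n] (q (n + 1)))
    (hcond : ∀ n, μ[s (n + 1)|ℱ n] =ᵐ[μ] q (n + 1))
    (hqconv : ∀ᵐ ω ∂μ, Tendsto (fun n => q (n + 1) ω) atTop (nhds ν)) :
    ∀ᵐ ω ∂μ, Tendsto (fun n : ℕ => (1 / (n : ℝ)) * ∑ k ∈ Finset.range n, s (k + 1) ω)
      atTop (nhds ν) := by
  have hle : ∀ n, ℱ n ≤ m := fun n => ℱ.le n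
  -- basic integrability facts
  have hsbd : ∀ k ω, |s (k + 1) ω| ≤ 1 := by
    intro k ω; rcases hs01 (k + 1) ω with h | h <;> simp [h]
  have hsmeas : ∀ k, StronglyMeasurable (s (k + 1)) := fun k => (hadapt k).mono (hle (k + 1))
  have hsint : ∀ k, Integrable (s (k + 1)) μ := fun k =>
    (integrable_const (1 : ℝ)).mono' (hsmeas k).aestronglyMeasurable
      (Filter.Eventually.of_forall fun ω => by rw [Real.norm_eq_abs]; exact hsbd k ω)
  have hqint : ∀ k, Integrable (q (k + 1)) μ := fun k => integrable_condExp.congr (hcond k)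
  have hq0 : ∀ k, ∀ᵐ ω ∂μ, 0 ≤ q (k + 1) ω := by
    intro k
    have h1 : (0 : Ω → ℝ) ≤ᵐ[μ] μ[s (k + 1)|ℱ k] :=
      condExp_nonneg (Filter.Eventually.of_forall fun ω => by
        rcases hs01 (k + 1) ω with h | h <;> simp [h])
    filter_upwards [h1, hcond k] with ω h1 h2
    rw [← h2]; exact h1
  have hq1 : ∀ k, ∀ᵐ ω ∂μ, q (k + 1) ω ≤ 1 := by
    intro k
    have h1 : μ[s (k + 1)|ℱ k] ≤ᵐ[μ] μ[(fun _ => (1 : ℝ))|ℱ k] :=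
      condExp_mono (hsint k) (integrable_const 1)
        (Filter.Eventually.of_forall fun ω => (abs_le.1 (hsbd k ω)).2)
    rw [condExp_const (hle k)] at h1
    filter_upwards [h1, hcond k] with ω h1 h2
    rw [← h2]; exact h1
  -- the martingale differences and the martingale
  set d : ℕ → Ω → ℝ := fun k ω => (((k : ℝ) + 1))⁻¹ * (s (k + 1) ω - q (k + 1) ω) with hddef
  set f : ℕ → Ω → ℝ := fun n ω => ∑ k ∈ Finset.range n, d k ω with hfdef
  have hdeq : ∀ k, d k = (((k : ℝ) + 1))⁻¹ • (s (k + 1) - q (k + 1)) := fun k => rfl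
  have hdSM : ∀ k, StronglyMeasurable[ℱ (k + 1)] (d k) := fun k => by
    rw [hdeq]
    exact ((hadapt k).sub ((hq k).mono (ℱ.mono (Nat.le_succ k)))).const_smul _
  have hdSMm : ∀ k, StronglyMeasurable (d k) := fun k => (hdSM k).mono (hle (k + 1))
  have hdint : ∀ k, Integrable (d k) μ := fun k => by
    rw [hdeq]; exact ((hsint k).sub (hqint k)).smul _
  have hdbd : ∀ k, ∀ᵐ ω ∂μ, |d k ω| ≤ 2 * (((k : ℝ) + 1))⁻¹ := by
    intro k
    filter_upwards [hq0 k, hq1 k] with ω h0 h1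
    have hk1 : (0 : ℝ) < (k : ℝ) + 1 := by positivity
    have habs : |s (k + 1) ω - q (k + 1) ω| ≤ 2 := by
      have := hsbd k ω
      rw [abs_le] at this ⊢
      constructor <;> linarith [this.1, this.2]
    calc |d k ω| = (((k : ℝ) + 1))⁻¹ * |s (k + 1) ω - q (k + 1) ω| := by
          rw [hddef, abs_mul, abs_of_nonneg (by positivity : (0:ℝ) ≤ (((k : ℝ) + 1))⁻¹)]
      _ ≤ (((k : ℝ) + 1))⁻¹ * 2 := by
          apply mul_le_mul_of_nonneg_left habs (by positivity)
      _ = 2 * (((k : ℝ) + 1))⁻¹ := by ring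
  have hfSMn : ∀ n, StronglyMeasurable[ℱ n] (f n) := fun n => by
    apply Finset.stronglyMeasurable_fun_sum
    intro k hk
    exact (hdSM k).mono (ℱ.mono (Finset.mem_range.1 hk))
  have hfadp : StronglyAdapted ℱ f := fun n => hfSMn n
  have hfSM : ∀ n, StronglyMeasurable (f n) := fun n => (hfSMn n).mono (hle n)
  have hfint : ∀ n, Integrable (f n) μ := fun n =>
    integrable_finset_sum _ fun k _ => hdint k
  have hfbd : ∀ n, ∀ᵐ ω ∂μ, |f n ω| ≤ 2 * n := by
    intro n
    filter_upwards [ae_all_iff.2 hdbd] with ω hω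
    calc |f n ω| ≤ ∑ k ∈ Finset.range n, |d k ω| := Finset.abs_sum_le_sum_abs _ _
      _ ≤ ∑ k ∈ Finset.range n, 2 := by
          apply Finset.sum_le_sum
          intro k _
          refine (hω k).trans ?_
          have : (((k : ℝ) + 1))⁻¹ ≤ 1 := by
            rw [inv_le_one_iff₀]; right; linarith [Nat.cast_nonneg (α := ℝ) k]
          linarith
      _ = 2 * n := by simp [mul_comm]
  -- conditional expectation of differences vanishes
  have hd0 : ∀ n, μ[d n|ℱ n] =ᵐ[μ] 0 := by
    intro n
    have h1 : μ[d n|ℱ n] =ᵐ[μ] (((n : ℝ) + 1))⁻¹ • μ[s (n + 1) - q (n + 1)|ℱ n] := by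
      rw [hdeq]; exact condExp_smul _ _ _
    have h2 : μ[s (n + 1) - q (n + 1)|ℱ n] =ᵐ[μ] μ[s (n + 1)|ℱ n] - μ[q (n + 1)|ℱ n] :=
      condExp_sub (hsint n) (hqint n) _
    have h3 : μ[q (n + 1)|ℱ n] = q (n + 1) :=
      condExp_of_stronglyMeasurable (hle n) (hq n) (hqint n)
    filter_upwards [h1, h2, hcond n] with ω e1 e2 e3
    rw [e1, Pi.smul_apply, e2, Pi.sub_apply, h3, e3, sub_self, smul_zero, Pi.zero_apply]
  -- martingale property
  have hsucc : ∀ n, f (n + 1) = f n + d n := fun n =>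
    funext fun ω => Finset.sum_range_succ _ _
  have hfmart : Martingale f ℱ μ := by
    refine martingale_nat hfadp hfint fun n => ?_
    rw [hsucc n]
    have h1 : μ[f n + d n|ℱ n] =ᵐ[μ] μ[f n|ℱ n] + μ[d n|ℱ n] :=
      condExp_add (hfint n) (hdint n) _
    have h2 : μ[f n|ℱ n] = f n :=
      condExp_of_stronglyMeasurable (hle n) (hfadp n) (hfint n)
    filter_upwards [h1, hd0 n] with ω e1 e2
    rw [e1, Pi.add_apply, h2, e2, Pi.zero_apply, add_zero]
  -- integrability of products
  have prod_int : ∀ (g h : Ω → ℝ) (B C : ℝ), StronglyMeasurable g → StronglyMeasurable h →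
      (∀ᵐ ω ∂μ, |g ω| ≤ B) → (∀ᵐ ω ∂μ, |h ω| ≤ C) →
      Integrable (fun ω => g ω * h ω) μ := by
    intro g h B C hg hh hgB hhC
    refine (integrable_const (B * C)).mono' (hg.mul hh).aestronglyMeasurable ?_
    filter_upwards [hgB, hhC] with ω h1 h2
    rw [Real.norm_eq_abs, abs_mul]
    have h0 : (0:ℝ) ≤ |g ω| := abs_nonneg _
    exact mul_le_mul h1 h2 (abs_nonneg _) ((abs_nonneg (g ω)).trans h1)
  have hfsq_int : ∀ n, Integrable (fun ω => f n ω * f n ω) μ := fun n =>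
    prod_int _ _ _ _ (hfSM n) (hfSM n) (hfbd n) (hfbd n)
  have hfd_int : ∀ n, Integrable (fun ω => f n ω * d n ω) μ := fun n =>
    prod_int _ _ (2 * n) 2 (hfSM n) (hdSMm n) (hfbd n)
      (by filter_upwards [hdbd n] with ω h; refine h.trans ?_
          have : (((n : ℝ) + 1))⁻¹ ≤ 1 := by
            rw [inv_le_one_iff₀]; right; linarith [Nat.cast_nonneg (α := ℝ) n]
          linarith)
  have hdsq_int : ∀ n, Integrable (fun ω => d n ω * d n ω) μ := fun n =>
    prod_int _ _ 2 2 (hdSMm n) (hdSMm n)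
      (by filter_upwards [hdbd n] with ω h; refine h.trans ?_
          have : (((n : ℝ) + 1))⁻¹ ≤ 1 := by
            rw [inv_le_one_iff₀]; right; linarith [Nat.cast_nonneg (α := ℝ) n]
          linarith)
      (by filter_upwards [hdbd n] with ω h; refine h.trans ?_
          have : (((n : ℝ) + 1))⁻¹ ≤ 1 := by
            rw [inv_le_one_iff₀]; right; linarith [Nat.cast_nonneg (α := ℝ) n]
          linarith)
  -- the cross term vanishes
  have hcross : ∀ n, ∫ ω, f n ω * d n ω ∂μ = 0 := by
    intro n
    have hmul : μ[f n * d n|ℱ n] =ᵐ[μ] f n * μ[d n|ℱ n] :=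
      condExp_mul_of_stronglyMeasurable_left (hfadp n) (hfd_int n) (hdint n)
    have h0 : μ[f n * d n|ℱ n] =ᵐ[μ] 0 := by
      refine hmul.trans ?_
      filter_upwards [hd0 n] with ω h
      rw [Pi.mul_apply, h, Pi.zero_apply, mul_zero]
    have h4 : ∫ ω, (μ[f n * d n|ℱ n]) ω ∂μ = ∫ ω, (f n * d n) ω ∂μ :=
      integral_condExp (hle n)
    have h5 : ∫ ω, (μ[f n * d n|ℱ n]) ω ∂μ = 0 := by
      rw [integral_congr_ae h0]; simp
    calc ∫ ω, f n ω * d n ω ∂μ = ∫ ω, (f n * d n) ω ∂μ := rfl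
      _ = 0 := by rw [← h4, h5]
  -- squared difference bound
  have hdsq_bd : ∀ n, ∫ ω, d n ω * d n ω ∂μ ≤ 4 * (((n : ℝ) + 1) ^ 2)⁻¹ := by
    intro n
    have : ∀ᵐ ω ∂μ, d n ω * d n ω ≤ 4 * (((n : ℝ) + 1) ^ 2)⁻¹ := by
      filter_upwards [hdbd n] with ω h
      have h0 : (0:ℝ) ≤ |d n ω| := abs_nonneg _
      have := mul_le_mul h h (abs_nonneg _) (by positivity)
      rw [abs_mul_abs_self] at this
      refine this.trans (le_of_eq ?_)
      rw [sq]
      field_simp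
      ring
    calc ∫ ω, d n ω * d n ω ∂μ ≤ ∫ _ω : Ω, 4 * (((n : ℝ) + 1) ^ 2)⁻¹ ∂μ :=
          integral_mono_ae (hdsq_int n) (integrable_const _) this
      _ = 4 * (((n : ℝ) + 1) ^ 2)⁻¹ := by simp [measure_univ]
  -- L² bound by induction
  have hL2 : ∀ n, ∫ ω, f n ω * f n ω ∂μ ≤ ∑ k ∈ Finset.range n, 4 * (((k : ℝ) + 1) ^ 2)⁻¹ := by
    intro n
    induction n with
    | zero => simp [hfdef]
    | succ n ih =>
        have hexp : ∀ ω, f (n + 1) ω * f (n + 1) ω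
            = f n ω * f n ω + (2 * (f n ω * d n ω) + d n ω * d n ω) := by
          intro ω
          rw [hsucc n, Pi.add_apply]
          ring
        have hint2 : Integrable (fun ω => 2 * (f n ω * d n ω) + d n ω * d n ω) μ :=
          ((hfd_int n).const_mul 2).add (hdsq_int n)
        have e1 : ∫ ω, f (n + 1) ω * f (n + 1) ω ∂μ
            = ∫ ω, f n ω * f n ω ∂μ + ∫ ω, (2 * (f n ω * d n ω) + d n ω * d n ω) ∂μ := by
          rw [← integral_add (hfsq_int n) hint2]
          exact integral_congr_ae (Filter.Eventually.of_forall hexp)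
        have e2 : ∫ ω, (2 * (f n ω * d n ω) + d n ω * d n ω) ∂μ
            = 2 * ∫ ω, f n ω * d n ω ∂μ + ∫ ω, d n ω * d n ω ∂μ := by
          rw [integral_add ((hfd_int n).const_mul 2) (hdsq_int n), integral_const_mul]
        rw [Finset.sum_range_succ]
        rw [e1, e2, hcross n]
        linarith [hdsq_bd n, ih]
  have hL2' : ∀ n, ∫ ω, f n ω * f n ω ∂μ ≤ 8 := by
    intro n
    refine (hL2 n).trans ?_
    have := invsq_sum_le n
    calc ∑ k ∈ Finset.range n, 4 * (((k : ℝ) + 1) ^ 2)⁻¹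
        = 4 * ∑ k ∈ Finset.range n, (((k : ℝ) + 1) ^ 2)⁻¹ := by rw [Finset.mul_sum]
      _ ≤ 4 * 2 := by linarith
      _ = 8 := by norm_num
  -- uniform L¹ bound
  have habs : ∀ n, ∫ ω, |f n ω| ∂μ ≤ 9 := by
    intro n
    have hptle : ∀ ω, |f n ω| ≤ 1 + f n ω * f n ω := by
      intro ω
      nlinarith [sq_nonneg (|f n ω| - 1), abs_mul_abs_self (f n ω)]
    calc ∫ ω, |f n ω| ∂μ ≤ ∫ ω, (1 + f n ω * f n ω) ∂μ :=
          integral_mono (hfint n).abs ((integrable_const 1).add (hfsq_int n))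
            hptle
      _ = 1 + ∫ ω, f n ω * f n ω ∂μ := by
          rw [integral_add (integrable_const 1) (hfsq_int n)]; simp [measure_univ]
      _ ≤ 1 + 8 := by linarith [hL2' n]
      _ = 9 := by norm_num
  have hbdd : ∀ n, eLpNorm (f n) 1 μ ≤ ((9 : NNReal) : ENNReal) := by
    intro n
    rw [eLpNorm_one_eq_lintegral_enorm, ← ofReal_integral_norm_eq_lintegral_enorm (hfint n)]
    have : ENNReal.ofReal (∫ ω, ‖f n ω‖ ∂μ) ≤ ENNReal.ofReal 9 :=
      ENNReal.ofReal_le_ofReal (by simpa [Real.norm_eq_abs] using habs n)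
    refine this.trans (le_of_eq ?_)
    simp [ENNReal.ofReal]
  -- martingale convergence
  have htend := hfmart.submartingale.ae_tendsto_limitProcess hbdd
  -- conclusion
  filter_upwards [htend, hqconv] with ω hfω hqω
  have hk := kronecker_special (fun k => d k ω) _ hfω
  have hk' : Tendsto (fun n : ℕ => (1 / (n : ℝ)) *
      ∑ k ∈ Finset.range n, (s (k + 1) ω - q (k + 1) ω)) atTop (nhds 0) := by
    refine hk.congr fun n => ?_
    congr 1
    refine Finset.sum_congr rfl fun k _ => ?_
    have hk0 : ((k : ℝ) + 1) ≠ 0 := by positivity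
    rw [hddef, mul_inv_cancel_left₀ hk0]
  have hcq := hqω.cesaro
  have hsum := hk'.add hcq
  rw [zero_add] at hsum
  refine hsum.congr fun n => ?_
  rw [Finset.sum_sub_distrib, one_div]
  ring
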